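/- arXiv:2601.23054 — 3 statements merged into one kernel-verified Lean document; each statement's English description precedes it below -/
import Mathlib

section
/- For every f in H there exists a unique tuple of integers (n_1, …, n_s) ∈ ℤ^s such that for every x ∈ ℝ/ℤ one has f(x) − x − (n_1·α_1 + … + n_s·α_s mod 1) ∈ { p/q mod 1 : p ∈ ℤ }. -/
open Equiv

noncomputable section

/-- The circle `ℝ/ℤ`. -/
abbrev Circ : Type := AddCircle (1 : ℝ)

/-- Rotation by `a` : the bijection `x ↦ x + a` of the circle. -/
def Rot (a : Circ) : Equiv.Perm Circ := Equiv.addRight a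

/-- The subgroup `{ p/q mod 1 : p ∈ ℤ }` of the circle. -/
def RatPts (q : ℕ) : AddSubgroup Circ :=
  AddSubgroup.zmultiples (((q : ℝ)⁻¹ : ℝ) : Circ)

/-- The group of bijections of the circle all of whose displacements lie in `RatPts q`. -/
def Delta (q : ℕ) : Subgroup (Equiv.Perm Circ) where
  carrier := {f | ∀ x : Circ, f x - x ∈ RatPts q}
  one_mem' := by intro x; simpa using zero_mem (RatPts q)
  mul_mem' := by
    intro f g hf hg x
    have h1 : f (g x) - g x ∈ RatPts q := hf (g x)
    have h2 : g x - x ∈ RatPts q := hg x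
    have h3 := add_mem h1 h2
    simpa [Equiv.Perm.mul_apply, sub_add_sub_cancel] using h3
  inv_mem' := by
    intro f hf x
    have h1 : f (f⁻¹ x) - f⁻¹ x ∈ RatPts q := hf (f⁻¹ x)
    rw [show f (f⁻¹ x) = x from Equiv.apply_symm_apply f x] at h1
    simpa using neg_mem h1

/-- The subgroup `A` of the circle generated by the classes of `α₁, …, α_s`. -/
def Agrp (s : ℕ) (α : Fin s → ℝ) : AddSubgroup Circ :=
  AddSubgroup.closure (Set.range fun i => ((α i : ℝ) : Circ))

/-- The group `H` generated by the rotations `R_{αᵢ}` and the maps `E_{τⱼ}`. -/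
def Hgrp (s m q : ℕ) (α : Fin s → ℝ) (τs : Fin m → Equiv.Perm (Fin q))
    (E : Equiv.Perm (Fin q) → Equiv.Perm Circ) : Subgroup (Equiv.Perm Circ) :=
  Subgroup.closure ((Set.range fun i => Rot ((α i : ℝ) : Circ)) ∪ (Set.range fun j => E (τs j)))

/-- The group `Q` generated by the maps `E_{τⱼ}`. -/
def Qgrp (m q : ℕ) (τs : Fin m → Equiv.Perm (Fin q))
    (E : Equiv.Perm (Fin q) → Equiv.Perm Circ) : Subgroup (Equiv.Perm Circ) :=
  Subgroup.closure (Set.range fun j => E (τs j))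

/-- The subgroup `𝔖(Q)` of `S_q` generated by `τ₁, …, τ_m`. -/
def SQgrp (m q : ℕ) (τs : Fin m → Equiv.Perm (Fin q)) : Subgroup (Equiv.Perm (Fin q)) :=
  Subgroup.closure (Set.range τs)

/-- The subgroup `W = ⟨σ, τ₁, …, τ_m⟩` of `S_q`, where `σ` is the `q`-cycle. -/
def Wgrp (m q : ℕ) (τs : Fin m → Equiv.Perm (Fin q)) : Subgroup (Equiv.Perm (Fin q)) :=
  Subgroup.closure ({finRotate q} ∪ Set.range τs)

lemma helper1 (q : ℕ) (k : ℤ) : (((k / q : ℝ)) : Circ) ∈ RatPts q := by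
  refine ⟨k, ?_⟩
  show k • (((q:ℝ)⁻¹ : ℝ) : Circ) = _
  rw [← AddCircle.coe_zsmul]
  congr 1; rw [zsmul_eq_mul, div_eq_mul_inv]

lemma rep (x : Circ) : ∃ r : ℝ, 0 ≤ r ∧ r < 1 ∧ (r : Circ) = x := by
  induction x using QuotientAddGroup.induction_on with
  | H r =>
    refine ⟨Int.fract r, Int.fract_nonneg r, Int.fract_lt_one r, ?_⟩
    rw [Int.fract, AddCircle.coe_sub, sub_eq_self]
    rw [AddCircle.coe_eq_zero_iff]
    exact ⟨⌊r⌋, by rw [zsmul_eq_mul, mul_one]⟩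

lemma Edisp (q : ℕ) (hq : 2 ≤ q) (E : Equiv.Perm (Fin q) → Equiv.Perm Circ)
    (hE : ∀ (τ : Equiv.Perm (Fin q)) (i : Fin q) (t : ℝ), 0 ≤ t → t < 1 / q →
      E τ ((((i : ℕ) : ℝ) / q + t : ℝ) : Circ) = ((((τ i : ℕ) : ℝ) / q + t : ℝ) : Circ))
    (τ : Equiv.Perm (Fin q)) (x : Circ) : E τ x - x ∈ RatPts q := by
  have hq0 : (0:ℝ) < q := by exact_mod_cast lt_of_lt_of_le two_pos hq
  obtain ⟨r, hr0, hr1, rfl⟩ := rep x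
  have hfl0 : (0:ℤ) ≤ ⌊r * q⌋ := Int.floor_nonneg.2 (by positivity)
  set i : ℕ := (⌊r * q⌋).toNat with hi
  have hic : (i : ℝ) = ⌊r * q⌋ := by rw [hi]; exact_mod_cast Int.toNat_of_nonneg hfl0
  have hiq : i < q := by
    have h1 : (i : ℝ) < q := by
      rw [hic]
      calc ((⌊r * q⌋ : ℝ)) ≤ r * q := Int.floor_le _
        _ < 1 * q := by exact mul_lt_mul_of_pos_right hr1 hq0
        _ = q := one_mul _
    exact_mod_cast h1
  set t : ℝ := r - i / q with ht
  have ht0 : 0 ≤ t := by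
    rw [ht, sub_nonneg, div_le_iff₀ hq0, hic]
    exact Int.floor_le _
  have ht1 : t < 1 / q := by
    rw [ht, sub_lt_iff_lt_add, ← add_div, lt_div_iff₀ hq0]
    rw [hic]
    rw [add_comm]; exact Int.lt_floor_add_one (r * q)
  have hx : (r : Circ) = ((((⟨i, hiq⟩ : Fin q) : ℕ) : ℝ) / q + t : ℝ) := by
    congr 1
    simp only [ht]
    ring
  rw [hx, hE τ ⟨i, hiq⟩ t ht0 ht1]
  have : ((((τ ⟨i, hiq⟩ : ℕ) : ℝ) / q + t : ℝ) : Circ) - ((((⟨i, hiq⟩ : Fin q) : ℕ) : ℝ) / q + t : ℝ) =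
      (((((τ ⟨i, hiq⟩ : ℕ) : ℤ) - (i : ℤ)) / q : ℝ) : Circ) := by
    rw [← AddCircle.coe_sub]
    congr 1; push_cast; ring
  rw [this]
  exact_mod_cast helper1 q ((τ ⟨i, hiq⟩ : ℕ) - (i : ℤ))

lemma coe_sum (s : ℕ) (g : Fin s → ℝ) :
    (((∑ i, g i : ℝ)) : Circ) = ∑ i, ((g i : ℝ) : Circ) :=
  map_sum (QuotientAddGroup.mk' (AddSubgroup.zmultiples (1:ℝ))) _ _

lemma helper2 (s q : ℕ) (hq : 2 ≤ q) (α : Fin s → ℝ)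
    (hα : LinearIndependent ℚ (Fin.cons (1 : ℝ) α))
    (n : Fin s → ℤ) (h : (∑ i, n i • ((α i : ℝ) : Circ)) ∈ RatPts q) : n = 0 := by
  obtain ⟨k, hk⟩ := h
  have hq0 : (q : ℝ) ≠ 0 := by positivity
  have hsum : (∑ i, n i • ((α i : ℝ) : Circ)) = (((∑ i, (n i : ℝ) * α i : ℝ)) : Circ) := by
    rw [coe_sum]
    congr 1; funext i
    rw [← zsmul_eq_mul, AddCircle.coe_zsmul]
  have hkq : k • (((q:ℝ)⁻¹ : ℝ) : Circ) = (((k/q : ℝ)) : Circ) := by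
    rw [← AddCircle.coe_zsmul]; congr 1; rw [zsmul_eq_mul, div_eq_mul_inv]
  have hk' : (((∑ i, (n i : ℝ) * α i) - k / q : ℝ) : Circ) = 0 := by
    rw [AddCircle.coe_sub, sub_eq_zero, ← hsum, ← hkq]
    exact hk.symm
  rw [AddCircle.coe_eq_zero_iff] at hk'
  obtain ⟨j, hj⟩ := hk'
  rw [zsmul_eq_mul, mul_one] at hj
  have hrel : ∑ i, (n i : ℝ) * α i = (j : ℝ) + k / q := by linarith
  set g : Fin (s+1) → ℚ := Fin.cons (-(j + (k:ℚ)/q)) (fun i => (n i : ℚ)) with hg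
  have hzero : ∑ i, g i • (Fin.cons (1:ℝ) α : Fin (s+1) → ℝ) i = 0 := by
    rw [Fin.sum_univ_succ]
    simp only [hg, Fin.cons_zero, Fin.cons_succ]
    have : ∀ i : Fin s, ((n i : ℚ)) • α i = (n i : ℝ) * α i := by
      intro i; rw [Rat.smul_def]; push_cast; ring
    rw [Finset.sum_congr rfl (fun i _ => this i), hrel, Rat.smul_def]
    push_cast
    field_simp
    ring
  have := Fintype.linearIndependent_iff.mp hα g hzero
  funext i
  have h2 := this i.succ
  simp only [hg, Fin.cons_succ] at h2
  exact_mod_cast h2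

theorem stmt_0
    (s m q : ℕ) (hs : 1 ≤ s) (hm : 1 ≤ m) (hq : 2 ≤ q)
    (α : Fin s → ℝ) (hα : LinearIndependent ℚ (Fin.cons (1 : ℝ) α))
    (τs : Fin m → Equiv.Perm (Fin q))
    (E : Equiv.Perm (Fin q) → Equiv.Perm Circ)
    (hE : ∀ (τ : Equiv.Perm (Fin q)) (i : Fin q) (t : ℝ), 0 ≤ t → t < 1 / q →
      E τ ((((i : ℕ) : ℝ) / q + t : ℝ) : Circ) = ((((τ i : ℕ) : ℝ) / q + t : ℝ) : Circ))
    (f : Equiv.Perm Circ) (hf : f ∈ Hgrp s m q α τs E) :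
    ∃! n : Fin s → ℤ, ∀ x : Circ,
      f x - x - ∑ i, n i • ((α i : ℝ) : Circ) ∈ RatPts q := by
  have hf' : f ∈ Subgroup.closure
      ((Set.range fun i => Rot ((α i : ℝ) : Circ)) ∪ (Set.range fun j => E (τs j))) := hf
  have key : ∃ n : Fin s → ℤ, ∀ x : Circ,
      f x - x - ∑ i, n i • ((α i : ℝ) : Circ) ∈ RatPts q := by
    refine Subgroup.closure_induction
      (p := fun g _ => ∃ n : Fin s → ℤ, ∀ x : Circ,
        g x - x - ∑ i, n i • ((α i : ℝ) : Circ) ∈ RatPts q) ?_ ?_ ?_ ?_ hf'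
    · rintro g (⟨i, rfl⟩ | ⟨j, rfl⟩)
      · refine ⟨Pi.single i 1, fun x => ?_⟩
        have h1 : ∑ k, (Pi.single i 1 : Fin s → ℤ) k • ((α k : ℝ) : Circ)
            = ((α i : ℝ) : Circ) := by
          simp [Pi.single_apply, Finset.sum_ite_eq']
        rw [h1]
        have h2 : Rot ((α i : ℝ) : Circ) x = x + ((α i : ℝ) : Circ) := rfl
        rw [h2]
        simpa using zero_mem (RatPts q)
      · refine ⟨0, fun x => ?_⟩
        simp only [Pi.zero_apply, zero_smul, Finset.sum_const_zero, sub_zero]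
        exact Edisp q hq E hE (τs j) x
    · exact ⟨0, fun x => by
        simp only [Pi.zero_apply, zero_smul, Finset.sum_const_zero, sub_zero,
          Equiv.Perm.coe_one, id_eq, sub_self]
        exact zero_mem _⟩
    · rintro g h _ _ ⟨ng, hng⟩ ⟨nh, hnh⟩
      refine ⟨ng + nh, fun x => ?_⟩
      have hadd := add_mem (hng (h x)) (hnh x)
      have heq : (g * h) x - x - ∑ i, (ng + nh) i • ((α i : ℝ) : Circ)
          = (g (h x) - h x - ∑ i, ng i • ((α i : ℝ) : Circ))
            + (h x - x - ∑ i, nh i • ((α i : ℝ) : Circ)) := by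
        simp only [Equiv.Perm.mul_apply, Pi.add_apply, add_smul, Finset.sum_add_distrib]
        abel
      rw [heq]; exact hadd
    · rintro g _ ⟨ng, hng⟩
      refine ⟨-ng, fun x => ?_⟩
      have hneg := neg_mem (hng (g⁻¹ x))
      rw [show g (g⁻¹ x) = x from Equiv.apply_symm_apply g x] at hneg
      have heq : g⁻¹ x - x - ∑ i, (-ng) i • ((α i : ℝ) : Circ)
          = -(x - g⁻¹ x - ∑ i, ng i • ((α i : ℝ) : Circ)) := by
        simp only [Pi.neg_apply, neg_smul, Finset.sum_neg_distrib]
        abel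
      rw [heq]; exact hneg
  obtain ⟨n, hn⟩ := key
  refine ⟨n, hn, fun n' hn' => ?_⟩
  have hsub := sub_mem (hn' 0) (hn 0)
  have heq : (f 0 - 0 - ∑ i, n' i • ((α i : ℝ) : Circ))
      - (f 0 - 0 - ∑ i, n i • ((α i : ℝ) : Circ))
      = ∑ i, (n - n') i • ((α i : ℝ) : Circ) := by
    simp only [Pi.sub_apply, sub_smul, Finset.sum_sub_distrib]
    abel
  rw [heq] at hsub
  have := helper2 s q hq α hα (n - n') hsub
  have : n - n' = 0 := this
  funext i
  have := congrFun this i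
  simp only [Pi.sub_apply, Pi.zero_apply, sub_eq_zero] at this
  exact this.symm
end
end

section
/- Let G be a group and N a subgroup of G containing the commutator subgroup [G,G]. Then G has a solvable subgroup of finite index if and only if N has a solvable subgroup of finite index. In particular, G is virtually solvable if and only if [G,G] is virtually solvable. -/
open Subgroup

open scoped commutatorElement
section Helpers

variable {G : Type*} [Group G]

private lemma normal_of_commutator_le' (N : Subgroup G) (hN : commutator G ≤ N) : N.Normal := by
  constructor
  intro n hn g
  have h : ⁅g, n⁆ ∈ N := hN (by
    rw [_root_.commutator_def]
    exact Subgroup.commutator_mem_commutator (Subgroup.mem_top g) (Subgroup.mem_top n))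
  have he : g * n * g⁻¹ = ⁅g, n⁆ * n := by group
  rw [he]; exact N.mul_mem h hn

private lemma isSolvable_of_le' {A B : Subgroup G} (h : A ≤ B) (hB : IsSolvable ↥B) :
    IsSolvable ↥A := by
  haveI : Group.IsSolvable ↥B := hB
  exact solvable_of_solvable_injective (Subgroup.inclusion_injective h)

private lemma isSolvable_sup' {U V : Subgroup G} [hUn : U.Normal]
    (hU : IsSolvable ↥U) (hV : IsSolvable ↥V) : IsSolvable ↥(U ⊔ V) := by
  rw [sup_comm]
  haveI : Group.IsSolvable ↥V := hV
  haveI : Group.IsSolvable ↥(U.subgroupOf (V ⊔ U)) := by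
    haveI : Group.IsSolvable ↥U := hU
    exact solvable_of_solvable_injective
      (f := (Subgroup.subgroupOfEquivOfLe (le_sup_right : U ≤ V ⊔ U)).toMonoidHom)
      (Subgroup.subgroupOfEquivOfLe (le_sup_right : U ≤ V ⊔ U)).injective
  haveI : Group.IsSolvable (↥(V ⊔ U) ⧸ U.subgroupOf (V ⊔ U)) :=
    solvable_of_surjective
      (f := (QuotientGroup.quotientInfEquivProdNormalQuotient V U).toMonoidHom)
      (QuotientGroup.quotientInfEquivProdNormalQuotient V U).surjective
  exact solvable_of_ker_le_range (U.subgroupOf (V ⊔ U)).subtype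
    (QuotientGroup.mk' (U.subgroupOf (V ⊔ U)))
    (by rw [QuotientGroup.ker_mk', Subgroup.range_subtype])

private lemma hard' (N : Subgroup G) (hN : commutator G ≤ N)
    (S : Subgroup ↥N) (hfi : S.FiniteIndex) (hsol : IsSolvable ↥S) :
    ∃ T : Subgroup G, T.FiniteIndex ∧ IsSolvable ↥T := by
  haveI hNn : N.Normal := normal_of_commutator_le' N hN
  classical
  set F : Set (Subgroup ↥N) := {U | U.Normal ∧ IsSolvable ↥U ∧ U.FiniteIndex} with hF
  have hS0 : S.normalCore ∈ F := by
    haveI := hfi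
    exact ⟨S.normalCore_normal, isSolvable_of_le' S.normalCore_le hsol, inferInstance⟩
  have hne : {n : ℕ | ∃ U ∈ F, U.index = n}.Nonempty := ⟨_, S.normalCore, hS0, rfl⟩
  obtain ⟨T, hTF, hTm⟩ := Nat.sInf_mem hne
  -- F is closed under sup
  have hsupF : ∀ U ∈ F, ∀ V ∈ F, U ⊔ V ∈ F := by
    intro U hU V hV
    haveI := hU.1; haveI := hV.1; haveI := hU.2.2
    exact ⟨inferInstance, isSolvable_sup' hU.2.1 hV.2.1, Subgroup.finiteIndex_of_le le_sup_left⟩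
  -- T is the maximum of F
  have hmax : ∀ U ∈ F, U ≤ T := by
    intro U hU
    have hW : T ⊔ U ∈ F := hsupF T hTF U hU
    have h1 : T.index ≤ (T ⊔ U).index := hTm ▸ Nat.sInf_le ⟨T ⊔ U, hW, rfl⟩
    haveI := hTF.2.2
    by_contra h
    have hlt : T < T ⊔ U := lt_of_le_of_ne le_sup_left (fun he => h (he ▸ le_sup_right))
    exact absurd (Subgroup.index_strictAnti hlt) (not_lt.mpr h1)
  -- T is invariant under conjugation by G
  have hconj : ∀ g : G, T.map (MulAut.conjNormal g : MulAut ↥N).toMonoidHom ≤ T := by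
    intro g
    set e := (MulAut.conjNormal g : MulAut ↥N) with he
    refine hmax _ ⟨hTF.1.map e.toMonoidHom e.surjective, ?_, ?_⟩
    · haveI : Group.IsSolvable ↥T := hTF.2.1
      exact solvable_of_surjective
        (f := (T.equivMapOfInjective e.toMonoidHom e.injective).toMonoidHom)
        (T.equivMapOfInjective e.toMonoidHom e.injective).surjective
    · constructor
      have hidx : (T.map e.toMonoidHom).index = T.index :=
        Subgroup.index_map_eq T (f := e.toMonoidHom) e.surjective
          (by
          have h0 : (e.toMonoidHom).ker = ⊥ := (MonoidHom.ker_eq_bot_iff _).mpr e.injective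
          rw [h0]; exact bot_le)
      rw [hidx]
      exact hTF.2.2.index_ne_zero
  set T' : Subgroup G := T.map N.subtype with hT'
  haveI hT'n : T'.Normal := by
    constructor
    rintro x hx g
    obtain ⟨t, ht, rfl⟩ := hx
    refine ⟨(MulAut.conjNormal g : MulAut ↥N) t, hconj g ⟨t, ht, rfl⟩, ?_⟩
    simp
  haveI hT'solv : Group.IsSolvable ↥T' := by
    haveI : Group.IsSolvable ↥T := hTF.2.1
    exact solvable_of_surjective
      (f := (T.equivMapOfInjective N.subtype N.subtype_injective).toMonoidHom)
      (T.equivMapOfInjective N.subtype N.subtype_injective).surjective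
  set π := QuotientGroup.mk' T' with hπ
  have hπsurj : Function.Surjective π := QuotientGroup.mk'_surjective T'
  set Kb : Subgroup (G ⧸ T') := N.map π with hKb
  haveI hKbn : Kb.Normal := hNn.map π hπsurj
  haveI hKbfin : Finite ↥Kb := by
    have hker : (π.comp N.subtype).ker = T := by
      rw [← MonoidHom.comap_ker, hπ, QuotientGroup.ker_mk', hT',
        Subgroup.comap_map_eq_self_of_injective N.subtype_injective]
    haveI := hTF.2.2
    haveI : Finite (↥N ⧸ (π.comp N.subtype).ker) := by
      rw [hker]; exact Subgroup.finite_quotient_of_finiteIndex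
    have hfin : Finite ↥(π.comp N.subtype).range :=
      Finite.of_equiv _ (QuotientGroup.quotientKerEquivRange (π.comp N.subtype)).toEquiv
    have hrange : (π.comp N.subtype).range = Kb := by
      rw [MonoidHom.range_comp, Subgroup.range_subtype, hKb]
    exact hrange ▸ hfin
  haveI : Finite (MulAut ↥Kb) :=
    Finite.of_injective (fun e => e.toEquiv) MulEquiv.toEquiv_injective
  set ψ : (G ⧸ T') →* MulAut ↥Kb := MulAut.conjNormal with hψ
  haveI : Finite ↥ψ.range := Subtype.finite
  haveI hCfi : ψ.ker.FiniteIndex := Subgroup.finiteIndex_ker ψ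
  set C := ψ.ker with hC
  have hCcent : ∀ x ∈ C, ∀ y ∈ Kb, x * y = y * x := by
    intro x hx y hy
    have h1 : ((ψ x) (⟨y, hy⟩ : ↥Kb) : G ⧸ T') = x * y * x⁻¹ := MulAut.conjNormal_apply x _
    rw [hx] at h1
    have h2 : y = x * y * x⁻¹ := h1
    calc x * y = (x * y * x⁻¹) * x := by group
    _ = y * x := by rw [← h2]
  have hQcomm : commutator (G ⧸ T') ≤ Kb := by
    have h1 : commutator (G ⧸ T') = Subgroup.map π (commutator G) := by
      rw [_root_.commutator_def, _root_.commutator_def, Subgroup.map_commutator,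
        Subgroup.map_top_of_surjective π hπsurj]
    rw [h1, hKb]
    exact Subgroup.map_mono hN
  haveI hCsolv : Group.IsSolvable ↥C := by
    refine ⟨⟨2, ?_⟩⟩
    have hD : derivedSeries ↥C 2 = ⁅derivedSeries ↥C 1, derivedSeries ↥C 1⁆ :=
      derivedSeries_succ ↥C 1
    rw [hD, Subgroup.commutator_eq_bot_iff_le_centralizer]
    have hmem : ∀ z : ↥C, z ∈ derivedSeries ↥C 1 → (↑z : G ⧸ T') ∈ Kb := by
      intro z hz
      have h0 : (↑z : G ⧸ T') ∈ Subgroup.map C.subtype (commutator ↥C) :=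
        ⟨z, by rwa [← derivedSeries_one], rfl⟩
      have h2 : Subgroup.map C.subtype (commutator ↥C) ≤ commutator (G ⧸ T') := by
        rw [_root_.commutator_def, Subgroup.map_commutator, _root_.commutator_def]
        exact Subgroup.commutator_mono le_top le_top
      exact hQcomm (h2 h0)
    intro x hx
    rw [Subgroup.mem_centralizer_iff]
    intro y hy
    have h3 : (↑x : G ⧸ T') * ↑y = ↑y * ↑x := hCcent ↑x x.2 ↑y (hmem y hy)
    refine Subtype.ext ?_
    show ((↑y : G ⧸ T') * ↑x) = ↑x * ↑y
    exact h3.symm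
  -- the finite-index solvable subgroup of G is the preimage of C
  refine ⟨C.comap π, ?_, ?_⟩
  · constructor
    rw [Subgroup.index_comap_of_surjective _ hπsurj]
    exact hCfi.index_ne_zero
  · have hT'le2 : T' ≤ C.comap π := by
      intro x hx
      have h1 : π x = 1 := by
        rw [← QuotientGroup.ker_mk' T'] at hx
        exact hx
      show π x ∈ C
      rw [h1]; exact C.one_mem
    refine solvable_of_ker_le_range (Subgroup.inclusion hT'le2)
      ((π.comp (C.comap π).subtype).codRestrict C (fun x => x.2)) ?_
    intro x hx
    have hx1 : π ↑x = 1 := congrArg Subtype.val hx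
    have hx2 : (↑x : G) ∈ (QuotientGroup.mk' T').ker := hx1
    rw [QuotientGroup.ker_mk'] at hx2
    exact ⟨⟨↑x, hx2⟩, rfl⟩

private lemma easy_dir' (N : Subgroup G) (S : Subgroup G) (hfi : S.FiniteIndex)
    (hsol : IsSolvable ↥S) : ∃ S' : Subgroup ↥N, S'.FiniteIndex ∧ IsSolvable ↥S' := by
  refine ⟨S.subgroupOf N, ?_, ?_⟩
  · haveI := hfi
    exact inferInstance
  · haveI : Group.IsSolvable ↥S := hsol
    let f : ↥(S.subgroupOf N) →* ↥S :=
      { toFun := fun x => ⟨((x : ↥N) : G), x.2⟩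
        map_one' := rfl
        map_mul' := fun _ _ => rfl }
    refine solvable_of_solvable_injective (f := f) ?_
    intro a b h
    have h1 := congrArg (Subtype.val : ↥S → G) h
    exact Subtype.ext (Subtype.ext h1)

private lemma main_iff' (N : Subgroup G) (hN : commutator G ≤ N) :
    (∃ S : Subgroup G, S.FiniteIndex ∧ IsSolvable ↥S) ↔
      (∃ S : Subgroup ↥N, S.FiniteIndex ∧ IsSolvable ↥S) := by
  constructor
  · rintro ⟨S, h1, h2⟩
    exact easy_dir' N S h1 h2
  · rintro ⟨S, h1, h2⟩
    exact hard' N hN S h1 h2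

end Helpers

theorem stmt_3 {G : Type*} [Group G] (N : Subgroup G) (hN : commutator G ≤ N) :
    ((∃ S : Subgroup G, S.FiniteIndex ∧ IsSolvable ↥S) ↔
      (∃ S : Subgroup ↥N, S.FiniteIndex ∧ IsSolvable ↥S)) ∧
    ((∃ S : Subgroup G, S.FiniteIndex ∧ IsSolvable ↥S) ↔
      (∃ S : Subgroup ↥(commutator G), S.FiniteIndex ∧ IsSolvable ↥S)) :=
  ⟨main_iff' N hN, main_iff' (commutator G) le_rfl⟩
end

section
/- The torsion elements of H form a normal subgroup T(H), which equals K; the quotient group H/T(H) is isomorphic to A, hence is free abelian of rank s; and H splits as an internal semidirect product of K by the rotation subgroup: denoting by R_A the subgroup of H generated by the rotations R_{α_1},…,R_{α_s}, one has K ∩ R_A = {id} and K·R_A = H, so H ≅ K ⋊ A. -/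
open Equiv

noncomputable section

namespace Stmt15Aux

lemma circ_coe_add (x y : ℝ) : ((x + y : ℝ) : Circ) = ((x:ℝ):Circ) + ((y:ℝ):Circ) :=
  QuotientAddGroup.mk_add _ _ _

lemma circ_coe_sub (x y : ℝ) : ((x - y : ℝ) : Circ) = ((x:ℝ):Circ) - ((y:ℝ):Circ) :=
  QuotientAddGroup.mk_sub _ _ _

lemma circ_coe_zsmul (n : ℤ) (x : ℝ) : ((n • x : ℝ) : Circ) = n • ((x:ℝ):Circ) :=
  QuotientAddGroup.mk_zsmul _ _ _

lemma circ_eq_iff {x y : ℝ} : (x : Circ) = (y : Circ) ↔ ∃ k : ℤ, x - y = k * 1 := by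
  rw [QuotientAddGroup.eq_iff_sub_mem]
  simp [AddSubgroup.mem_zmultiples_iff, eq_comm, smul_eq_mul]

lemma circ_coe_sum {s : ℕ} (g : Fin s → ℝ) :
    ((∑ i, g i : ℝ) : Circ) = ∑ i, ((g i : ℝ) : Circ) := by
  induction (Finset.univ : Finset (Fin s)) using Finset.induction_on with
  | empty => simp
  | insert a s h ih => rw [Finset.sum_insert h, Finset.sum_insert h, circ_coe_add, ih]

/-- the central independence fact -/
lemma key_indep {s : ℕ} {α : Fin s → ℝ}
    (hα : LinearIndependent ℚ (Fin.cons (1:ℝ) α)) (c : Fin s → ℤ) (r : ℚ)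
    (h : ∑ i, (c i : ℝ) * α i = (r : ℝ)) : ∀ i, c i = 0 := by
  rw [Fintype.linearIndependent_iff] at hα
  have h2 := hα (Fin.cons (-r) (fun i => (c i : ℚ))) ?_
  · intro i
    have := h2 i.succ
    rw [Fin.cons_succ] at this
    exact_mod_cast this
  · rw [Fin.sum_univ_succ]
    simp only [Fin.cons_succ, Fin.cons_zero, Rat.smul_def]
    push_cast
    rw [h]
    ring

lemma mem_Agrp {s : ℕ} {α : Fin s → ℝ} {a : Circ} (ha : a ∈ Agrp s α) :
    ∃ c : Fin s → ℤ, a = ∑ i, c i • ((α i : ℝ) : Circ) := by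
  induction ha using AddSubgroup.closure_induction with
  | mem x hx =>
    obtain ⟨i, rfl⟩ := hx
    exact ⟨Pi.single i 1, by simp [Pi.single_apply, ite_smul]⟩
  | zero => exact ⟨0, by simp⟩
  | add x y hx hy ihx ihy =>
    obtain ⟨c, rfl⟩ := ihx; obtain ⟨d, rfl⟩ := ihy
    exact ⟨c + d, by simp [add_smul, Finset.sum_add_distrib]⟩
  | neg x hx ihx =>
    obtain ⟨c, rfl⟩ := ihx
    exact ⟨-c, by simp [neg_smul, Finset.sum_neg_distrib]⟩

lemma sum_zsmul_coe {s : ℕ} (α : Fin s → ℝ) (c : Fin s → ℤ) :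
    ∑ i, c i • ((α i : ℝ) : Circ) = ((∑ i, (c i : ℝ) * α i : ℝ) : Circ) := by
  rw [circ_coe_sum]
  refine Finset.sum_congr rfl fun i _ => ?_
  rw [← circ_coe_zsmul]
  norm_num

/-- If an element of `A` represented by coefficients `c` equals `n • (1/q)`, then `c = 0`. -/
lemma key_circ {s q : ℕ} (hq : 0 < q) {α : Fin s → ℝ}
    (hα : LinearIndependent ℚ (Fin.cons (1:ℝ) α)) (c : Fin s → ℤ) (n : ℤ)
    (h : ∑ i, c i • ((α i : ℝ) : Circ) = n • (((q : ℝ)⁻¹ : ℝ) : Circ)) : ∀ i, c i = 0 := by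
  rw [sum_zsmul_coe, ← circ_coe_zsmul, circ_eq_iff] at h
  obtain ⟨k, hk⟩ := h
  refine key_indep hα c ((n : ℚ) / q + k) ?_
  have hq' : (q : ℝ) ≠ 0 := Nat.cast_ne_zero.mpr hq.ne'
  rw [zsmul_eq_mul] at hk
  push_cast
  rw [div_eq_mul_inv]
  linarith [hk]

/-- every point of the circle decomposes as `i/q + t`. -/
lemma circ_decomp {q : ℕ} (hq : 0 < q) (x : Circ) :
    ∃ (i : Fin q) (t : ℝ), 0 ≤ t ∧ t < 1 / q ∧ ((((i : ℕ) : ℝ) / q + t : ℝ) : Circ) = x := by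
  haveI : Fact ((0:ℝ) < 1) := ⟨one_pos⟩
  set z := AddCircle.equivIco (1:ℝ) 0 x with hz
  have hb : (z : ℝ) ∈ Set.Ico (0:ℝ) 1 := by simpa using z.2
  have hbx : (((z : ℝ) : ℝ) : Circ) = x := by
    have h := (AddCircle.equivIco (1:ℝ) 0).symm_apply_apply x
    rwa [show (AddCircle.equivIco (1:ℝ) 0).symm z = (((z : ℝ) : ℝ) : Circ) from rfl] at h
  set b : ℝ := (z : ℝ) with hbdef
  have hq' : (0:ℝ) < q := by exact_mod_cast hq
  set i0 : ℤ := ⌊(q : ℝ) * b⌋ with hi0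
  have h0 : 0 ≤ i0 := Int.floor_nonneg.mpr (mul_nonneg hq'.le hb.1)
  have hlt : i0 < (q : ℤ) := by
    rw [hi0, Int.floor_lt]
    push_cast
    exact mul_lt_of_lt_one_right hq' hb.2
  have htn : ((i0.toNat : ℤ)) = i0 := Int.toNat_of_nonneg h0
  refine ⟨⟨i0.toNat, by omega⟩, b - (i0 : ℝ)/q, ?_, ?_, ?_⟩
  · rw [sub_nonneg, div_le_iff₀ hq']
    have := Int.floor_le ((q:ℝ) * b)
    rw [← hi0] at this
    linarith
  · rw [sub_lt_iff_lt_add, ← add_div, lt_div_iff₀ hq']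
    have := Int.lt_floor_add_one ((q:ℝ) * b)
    rw [← hi0] at this
    linarith
  · refine Eq.trans ?_ hbx
    congr 1
    have : (((i0.toNat : ℕ) : ℝ)) = (i0 : ℝ) := by exact_mod_cast congrArg (Int.cast : ℤ → ℝ) htn
    simp only [this]
    ring

/-- the maps `E τ` have displacements in `RatPts q`. -/
lemma Edisp {q : ℕ} (hq : 0 < q)
    (E : Equiv.Perm (Fin q) → Equiv.Perm Circ)
    (hE : ∀ (τ : Equiv.Perm (Fin q)) (i : Fin q) (t : ℝ), 0 ≤ t → t < 1 / q →
      E τ ((((i : ℕ) : ℝ) / q + t : ℝ) : Circ) = ((((τ i : ℕ) : ℝ) / q + t : ℝ) : Circ))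
    (τ : Equiv.Perm (Fin q)) (x : Circ) : E τ x - x ∈ RatPts q := by
  obtain ⟨i, t, ht0, ht1, hx⟩ := circ_decomp hq x
  rw [← hx, hE τ i t ht0 ht1]
  refine AddSubgroup.mem_zmultiples_iff.mpr ⟨((τ i : ℕ) : ℤ) - ((i : ℕ) : ℤ), ?_⟩
  have hq' : (q : ℝ) ≠ 0 := Nat.cast_ne_zero.mpr hq.ne'
  have e : ((((τ i : ℕ) : ℤ) - ((i : ℕ) : ℤ)) • ((q:ℝ)⁻¹) : ℝ)
      = (((τ i : ℕ) : ℝ) / q + t) - (((i : ℕ) : ℝ) / q + t) := by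
    rw [zsmul_eq_mul]
    push_cast
    field_simp
    ring
  rw [← circ_coe_sub, ← e, circ_coe_zsmul]

/-- elements of `Delta q` are killed by `q!`. -/
lemma delta_tors {q : ℕ} (hq : 0 < q) {f : Equiv.Perm Circ} (hf : f ∈ Delta q) :
    f ^ (Nat.factorial q) = 1 := by
  have hq' : (q : ℝ) ≠ 0 := Nat.cast_ne_zero.mpr hq.ne'
  have hqu : ((q : ℤ)) • (((q:ℝ)⁻¹ : ℝ) : Circ) = 0 := by
    rw [← circ_coe_zsmul]
    have : ((q:ℤ) • ((q:ℝ)⁻¹) : ℝ) = 1 := by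
      rw [zsmul_eq_mul]; push_cast; field_simp
    rw [this]
    exact AddCircle.coe_period (1:ℝ)
  ext x
  have hiter : ∀ n : ℕ, (f ^ n) x - x ∈ RatPts q := by
    intro n
    induction n with
    | zero => simpa using zero_mem (RatPts q)
    | succ n ih =>
      have h1 : f ((f ^ n) x) - (f ^ n) x ∈ RatPts q := hf _
      have h2 := add_mem h1 ih
      rw [sub_add_sub_cancel] at h2
      rw [pow_succ']
      simpa [Equiv.Perm.mul_apply] using h2
  have hchoice : ∀ n : Fin (q+1), ∃ k : ℤ, k • (((q:ℝ)⁻¹:ℝ):Circ) = (f ^ (n : ℕ)) x - x :=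
    fun n => AddSubgroup.mem_zmultiples_iff.mp (hiter n)
  choose k hk using hchoice
  haveI : NeZero q := ⟨hq.ne'⟩
  have hcard : Fintype.card (ZMod q) < Fintype.card (Fin (q+1)) := by simp [ZMod.card]
  obtain ⟨a, b, hab, heq⟩ :=
    Fintype.exists_ne_map_eq_of_card_lt (fun n : Fin (q+1) => ((k n : ZMod q))) hcard
  have hsame : (f ^ (a : ℕ)) x = (f ^ (b : ℕ)) x := by
    have hdvd : (q : ℤ) ∣ k a - k b := by
      rwa [← ZMod.intCast_zmod_eq_zero_iff_dvd, Int.cast_sub, sub_eq_zero]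
    obtain ⟨c, hc⟩ := hdvd
    have : k a • (((q:ℝ)⁻¹:ℝ):Circ) = k b • (((q:ℝ)⁻¹:ℝ):Circ) := by
      have h3 : (k a - k b) • (((q:ℝ)⁻¹:ℝ):Circ) = 0 := by
        rw [hc, mul_comm, mul_smul, hqu, smul_zero]
      rw [sub_smul, sub_eq_zero] at h3
      exact h3
    have h4 := (hk a).symm.trans (this.trans (hk b))
    exact sub_left_injective h4
  have key : ∀ u v : ℕ, u < v → v ≤ q → (f ^ u) x = (f ^ v) x →
      (f ^ (Nat.factorial q)) x = x := by
    intro u v huv hvq he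
    have hd : (f ^ (v - u)) x = x := by
      apply (f ^ u).injective
      rw [← Equiv.Perm.mul_apply, ← pow_add, Nat.add_sub_cancel' huv.le]
      exact he.symm
    have hdvd : (v - u) ∣ Nat.factorial q := Nat.dvd_factorial (by omega) (by omega)
    obtain ⟨c, hc⟩ := hdvd
    rw [hc, pow_mul]
    have hall : ∀ n : ℕ, ((f ^ (v - u)) ^ n) x = x := by
      intro n
      induction n with
      | zero => simp
      | succ n ih => rw [pow_succ', Equiv.Perm.mul_apply, ih, hd]
    exact hall c
  have hone : (1 : Equiv.Perm Circ) x = x := rfl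
  rw [hone]
  rcases lt_or_gt_of_ne (fun h : (a : ℕ) = (b : ℕ) => hab (Fin.ext h)) with h | h
  · exact key a b h (Nat.lt_succ_iff.mp b.2) hsame
  · exact key b a h (Nat.lt_succ_iff.mp a.2) hsame.symm

/-- `A` is free of rank `s`. -/
lemma agrp_equiv {s q : ℕ} (hq : 0 < q) {α : Fin s → ℝ}
    (hα : LinearIndependent ℚ (Fin.cons (1:ℝ) α)) :
    Nonempty (↥(Agrp s α) ≃+ (Fin s → ℤ)) := by
  have hmem : ∀ c : Fin s → ℤ, ∑ i, c i • ((α i : ℝ) : Circ) ∈ Agrp s α := fun c =>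
    AddSubgroup.sum_mem _ (fun i _ => AddSubgroup.zsmul_mem _ (AddSubgroup.subset_closure (Set.mem_range_self i)) _)
  let g : (Fin s → ℤ) →+ ↥(Agrp s α) :=
    { toFun := fun c => ⟨∑ i, c i • ((α i : ℝ) : Circ), hmem c⟩
      map_zero' := by ext; simp
      map_add' := by intro c d; ext; simp [add_smul, Finset.sum_add_distrib] }
  have hinj : Function.Injective g := by
    intro c d hcd
    have h1 : ∑ i, (c - d) i • ((α i : ℝ) : Circ) = (0:ℤ) • (((q : ℝ)⁻¹ : ℝ) : Circ) := by
      have := congrArg (fun z : ↥(Agrp s α) => (z : Circ)) (sub_eq_zero.mpr hcd : g c - g d = 0)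
      simp only [AddSubgroup.coe_sub] at this
      simp only [Pi.sub_apply, sub_smul, Finset.sum_sub_distrib, zero_smul]
      exact this
    have := key_circ hq hα (c - d) 0 h1
    funext i
    have h2 := this i
    simp only [Pi.sub_apply, sub_eq_zero] at h2
    exact h2
  have hsurj : Function.Surjective g := by
    rintro ⟨a, ha⟩
    obtain ⟨c, rfl⟩ := mem_Agrp ha
    exact ⟨c, rfl⟩
  exact ⟨(AddEquiv.ofBijective g ⟨hinj, hsurj⟩).symm⟩

lemma rot_zero : Rot (0 : Circ) = 1 := by
  ext x; simp [Rot]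

lemma rot_add (a b : Circ) : Rot (a + b) = Rot a * Rot b := by
  ext x
  simp only [Rot, Equiv.Perm.mul_apply, Equiv.coe_addRight]
  rw [add_assoc, add_comm b a]

lemma rot_neg (a : Circ) : Rot (-a) = (Rot a)⁻¹ := by
  ext x
  simp only [Rot]
  rw [show ((Equiv.addRight a)⁻¹ : Equiv.Perm Circ) = (Equiv.addRight a).symm from rfl]
  simp

end Stmt15Aux

open Stmt15Aux

theorem stmt_15
    (s m q : ℕ) (hs : 1 ≤ s) (hm : 1 ≤ m) (hq : 2 ≤ q)
    (α : Fin s → ℝ) (hα : LinearIndependent ℚ (Fin.cons (1 : ℝ) α))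
    (τs : Fin m → Equiv.Perm (Fin q))
    (E : Equiv.Perm (Fin q) → Equiv.Perm Circ)
    (hE : ∀ (τ : Equiv.Perm (Fin q)) (i : Fin q) (t : ℝ), 0 ≤ t → t < 1 / q →
      E τ ((((i : ℕ) : ℝ) / q + t : ℝ) : Circ) = ((((τ i : ℕ) : ℝ) / q + t : ℝ) : Circ))
    (H K RA : Subgroup (Equiv.Perm Circ)) (hH : H = Hgrp s m q α τs E) (hK : K = H ⊓ Delta q)
    (hRA : RA = Subgroup.closure (Set.range fun i => Rot ((α i : ℝ) : Circ))) :
    (∀ f : ↥H, IsOfFinOrder f ↔ ↑f ∈ K) ∧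
    (K.subgroupOf H).Normal ∧
    (∃ φ : ↥H → Circ, (∀ f g : ↥H, φ (f * g) = φ f + φ g) ∧
      (∀ f : ↥H, φ f = 0 ↔ ↑f ∈ K) ∧ Set.range φ = (Agrp s α : Set Circ)) ∧
    Nonempty (↥(Agrp s α) ≃+ (Fin s → ℤ)) ∧
    K ⊓ RA = ⊥ ∧
    (∀ f ∈ H, ∃ k ∈ K, ∃ r ∈ RA, f = k * r) := by
  have hq0 : 0 < q := by omega
  -- displacement of the E-generators
  have hEd : ∀ τ (x : Circ), E τ x - x ∈ RatPts q := fun τ x => Edisp hq0 E hE τ x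
  -- every element of H has well-defined "rotation part" in A modulo RatPts q
  have hP : ∀ f ∈ H, ∃ a ∈ Agrp s α, ∀ x : Circ, f x - x - a ∈ RatPts q := by
    rw [hH]
    intro f hf
    induction hf using Subgroup.closure_induction with
    | mem g hg =>
      rcases hg with hg | hg
      · obtain ⟨i, rfl⟩ := hg
        refine ⟨((α i : ℝ) : Circ), AddSubgroup.subset_closure (Set.mem_range_self i),
          fun x => ?_⟩
        have e : Rot ((α i : ℝ) : Circ) x - x - ((α i : ℝ) : Circ) = 0 := by
          rw [show Rot ((α i : ℝ) : Circ) x = x + ((α i : ℝ) : Circ) from rfl]; abel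
        rw [e]; exact zero_mem _
      · obtain ⟨j, rfl⟩ := hg
        exact ⟨0, zero_mem _, fun x => by simpa using hEd (τs j) x⟩
    | one => exact ⟨0, zero_mem _, fun x => by simpa using zero_mem (RatPts q)⟩
    | mul f g hf hg ihf ihg =>
      obtain ⟨a, haA, ha⟩ := ihf; obtain ⟨b, hbA, hb⟩ := ihg
      refine ⟨a + b, add_mem haA hbA, fun x => ?_⟩
      have h2 := add_mem (ha (g x)) (hb x)
      have e : (f (g x) - g x - a) + (g x - x - b) = (f * g) x - x - (a + b) := by
        rw [Equiv.Perm.mul_apply]; abel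
      rwa [e] at h2
    | inv f hf ihf =>
      obtain ⟨a, haA, ha⟩ := ihf
      refine ⟨-a, neg_mem haA, fun x => ?_⟩
      have h2 := neg_mem (ha (f⁻¹ x))
      have e : -(f (f⁻¹ x) - f⁻¹ x - a) = f⁻¹ x - x - (-a) := by
        rw [show f (f⁻¹ x) = x from Equiv.apply_symm_apply f x]; abel
      rwa [e] at h2
  -- A meets RatPts q trivially
  have huniq : ∀ a ∈ Agrp s α, a ∈ RatPts q → a = 0 := by
    intro a haA haR
    obtain ⟨c, rfl⟩ := mem_Agrp haA
    obtain ⟨n, hn⟩ := AddSubgroup.mem_zmultiples_iff.mp haR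
    have hc := key_circ hq0 hα c n hn.symm
    exact Finset.sum_eq_zero fun i _ => by rw [hc i, zero_smul]
  have hsub : ∀ a b : Circ, a ∈ Agrp s α → b ∈ Agrp s α → a - b ∈ RatPts q → a = b :=
    fun a b ha hb h => sub_eq_zero.mp (huniq _ (sub_mem ha hb) h)
  -- the homomorphism φ
  let φ : ↥H → Circ := fun f => (hP f f.2).choose
  have hφ : ∀ f : ↥H, φ f ∈ Agrp s α ∧ ∀ x, (f : Equiv.Perm Circ) x - x - φ f ∈ RatPts q :=
    fun f => ⟨(hP f f.2).choose_spec.1, (hP f f.2).choose_spec.2⟩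
  have hφ_eq : ∀ (f : ↥H) (a : Circ), a ∈ Agrp s α →
      (∀ x, (f : Equiv.Perm Circ) x - x - a ∈ RatPts q) → φ f = a := by
    intro f a haA ha
    refine hsub _ _ (hφ f).1 haA ?_
    have h3 := sub_mem (ha 0) ((hφ f).2 0)
    have e : ((f : Equiv.Perm Circ) 0 - 0 - a) - ((f : Equiv.Perm Circ) 0 - 0 - φ f)
        = φ f - a := by abel
    rwa [e] at h3
  have hadd : ∀ f g : ↥H, φ (f * g) = φ f + φ g := by
    intro f g
    refine hφ_eq _ _ (add_mem (hφ f).1 (hφ g).1) fun x => ?_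
    have h2 := add_mem ((hφ f).2 ((g : Equiv.Perm Circ) x)) ((hφ g).2 x)
    have e : ((f : Equiv.Perm Circ) ((g : Equiv.Perm Circ) x) - (g : Equiv.Perm Circ) x - φ f)
        + ((g : Equiv.Perm Circ) x - x - φ g)
        = ((↑(f * g) : Equiv.Perm Circ)) x - x - (φ f + φ g) := by
      rw [Subgroup.coe_mul, Equiv.Perm.mul_apply]; abel
    rwa [e] at h2
  have hone : φ 1 = 0 := by
    have h1 := hadd 1 1
    rw [one_mul] at h1
    exact (left_eq_add.mp h1)
  have hinv : ∀ f : ↥H, φ f⁻¹ = -φ f := by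
    intro f
    have h1 := hadd f⁻¹ f
    rw [inv_mul_cancel, hone] at h1
    exact eq_neg_of_add_eq_zero_left h1.symm
  have hzero : ∀ f : ↥H, φ f = 0 ↔ (f : Equiv.Perm Circ) ∈ K := by
    intro f
    rw [hK]
    constructor
    · intro h
      refine ⟨f.2, fun x => ?_⟩
      have h1 := (hφ f).2 x
      rwa [h, sub_zero] at h1
    · intro h
      refine hφ_eq f 0 (zero_mem _) fun x => ?_
      simpa using h.2 x
  have hφRot : ∀ (a : Circ) (h : Rot a ∈ H), a ∈ Agrp s α → φ ⟨Rot a, h⟩ = a := by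
    intro a h haA
    refine hφ_eq _ a haA fun x => ?_
    have e : Rot a x - x - a = 0 := by
      rw [show Rot a x = x + a from rfl]; abel
    rw [e]; exact zero_mem _
  -- structure of RA
  have hRA_ex : ∀ f ∈ RA, ∃ a ∈ Agrp s α, f = Rot a := by
    rw [hRA]
    intro f hf
    induction hf using Subgroup.closure_induction with
    | mem g hg =>
      obtain ⟨i, rfl⟩ := hg
      exact ⟨((α i : ℝ) : Circ), AddSubgroup.subset_closure (Set.mem_range_self i), rfl⟩
    | one => exact ⟨0, zero_mem _, rot_zero.symm⟩
    | mul f g hf hg ihf ihg =>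
      obtain ⟨a, haA, rfl⟩ := ihf; obtain ⟨b, hbA, rfl⟩ := ihg
      exact ⟨a + b, add_mem haA hbA, (rot_add a b).symm⟩
    | inv f hf ihf =>
      obtain ⟨a, haA, rfl⟩ := ihf
      exact ⟨-a, neg_mem haA, (rot_neg a).symm⟩
  have hRot_mem_RA : ∀ a ∈ Agrp s α, Rot a ∈ RA := by
    intro a ha
    induction ha using AddSubgroup.closure_induction with
    | mem g hg =>
      rw [hRA]
      exact Subgroup.subset_closure (by obtain ⟨i, rfl⟩ := hg; exact Set.mem_range_self i)
    | zero => rw [rot_zero]; exact one_mem _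
    | add a b ha hb iha ihb => rw [rot_add]; exact mul_mem iha ihb
    | neg a ha iha => rw [rot_neg]; exact inv_mem iha
  have hRA_le_H : RA ≤ H := by
    rw [hRA, hH]
    exact Subgroup.closure_mono Set.subset_union_left
  refine ⟨?_, ?_, ⟨φ, hadd, hzero, ?_⟩, agrp_equiv hq0 hα, ?_, ?_⟩
  · -- torsion = K
    intro f
    constructor
    · intro hfin
      obtain ⟨n, hn, hfn⟩ := isOfFinOrder_iff_pow_eq_one.mp hfin
      have hpow : ∀ (g : ↥H) (n : ℕ), φ (g ^ n) = n • φ g := by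
        intro g n
        induction n with
        | zero => simpa using hone
        | succ n ih => rw [pow_succ, hadd, ih, succ_nsmul]
      have h1 : (n : ℕ) • φ f = 0 := by rw [← hpow, hfn, hone]
      have h2 : φ f = 0 := by
        obtain ⟨c, hc⟩ := mem_Agrp (hφ f).1
        have h3 : ∑ i, ((n : ℤ) * c i) • ((α i : ℝ) : Circ)
            = (0 : ℤ) • (((q : ℝ)⁻¹ : ℝ) : Circ) := by
          rw [zero_smul]
          calc ∑ i, ((n : ℤ) * c i) • ((α i : ℝ) : Circ)
              = (n : ℤ) • ∑ i, c i • ((α i : ℝ) : Circ) := by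
                rw [Finset.smul_sum]
                exact Finset.sum_congr rfl fun i _ => (mul_smul _ _ _)
            _ = (n : ℕ) • φ f := by rw [← hc, natCast_zsmul]
            _ = 0 := h1
        have h4 := key_circ hq0 hα _ 0 h3
        have h5 : ∀ i, c i = 0 := by
          intro i
          have := h4 i
          have hn' : (n : ℤ) ≠ 0 := Int.natCast_ne_zero.mpr hn.ne'
          exact (mul_eq_zero.mp this).resolve_left hn'
        rw [hc]
        exact Finset.sum_eq_zero fun i _ => by rw [h5 i, zero_smul]
      exact (hzero f).mp h2
    · intro hfK
      rw [hK] at hfK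
      have h1 : ((f : Equiv.Perm Circ)) ^ (Nat.factorial q) = 1 := delta_tors hq0 hfK.2
      refine isOfFinOrder_iff_pow_eq_one.mpr ⟨Nat.factorial q, Nat.factorial_pos q, ?_⟩
      ext1
      rw [SubmonoidClass.coe_pow]
      simpa using h1
  · -- normality
    refine ⟨fun n hn g => ?_⟩
    rw [Subgroup.mem_subgroupOf] at hn ⊢
    refine (hzero _).mp ?_
    rw [hadd, hadd, (hzero n).mpr hn, add_zero, hinv]
    exact add_neg_cancel _
  · -- range of φ
    ext a
    constructor
    · rintro ⟨f, rfl⟩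
      exact (hφ f).1
    · intro ha
      exact ⟨⟨Rot a, hRA_le_H (hRot_mem_RA a ha)⟩, hφRot a _ ha⟩
  · -- K ∩ RA = ⊥
    rw [eq_bot_iff]
    intro f hf
    obtain ⟨hfK, hfRA⟩ := hf
    obtain ⟨a, haA, rfl⟩ := hRA_ex f hfRA
    have hmem : Rot a ∈ H := hRA_le_H hfRA
    have h1 : φ ⟨Rot a, hmem⟩ = 0 := (hzero _).mpr hfK
    rw [hφRot a hmem haA] at h1
    rw [Subgroup.mem_bot, h1, rot_zero]
  · -- splitting
    intro f hf
    set F : ↥H := ⟨f, hf⟩ with hF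
    have haA : φ F ∈ Agrp s α := (hφ F).1
    have hrRA : Rot (φ F) ∈ RA := hRot_mem_RA _ haA
    set R : ↥H := ⟨Rot (φ F), hRA_le_H hrRA⟩ with hRdef
    refine ⟨↑(F * R⁻¹), ?_, Rot (φ F), hrRA, ?_⟩
    · refine (hzero _).mp ?_
      rw [hadd, hinv, hRdef, hφRot _ _ haA]
      exact add_neg_cancel _
    · show f = ↑(F * R⁻¹) * Rot (φ F)
      rw [Subgroup.coe_mul]
      simp only [hF, hRdef]
      rw [show ((R⁻¹ : ↥H) : Equiv.Perm Circ) = ((R : ↥H) : Equiv.Perm Circ)⁻¹ from rfl]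
      rw [hRdef]
      exact (inv_mul_cancel_right f (Rot (φ F))).symm
end
end
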